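/- Fix δ ∈ (0,1/3], let μ be the Borel measure on ℝ determined by μ([j + i·3^{−n}, j + (i+1)·3^{−n})) = δ^{n−k(i)}(1−2δ)^{k(i)} for all integers j, n ≥ 0 and 0 ≤ i < 3^n (where k(i) is the number of digits equal to 1 among the first n ternary digits of i), and for integers 0 ≤ k ≤ n let K(n,k) be the union of those triadic intervals I ⊆ [0,1) of length 3^{−n} with μ(I) ≥ δ^k (1−2δ)^{n−k}. If 2δn ≤ k ≤ (2/3)n, then the Lebesgue measure of K(n,k) satisfies |K(n,k)| ≤ 3^{−n}·e^{k[1 + log(1/δ)]}. -/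

import Mathlib

open MeasureTheory Set

noncomputable section

/-- The number of ternary (base-3) digits of `i` equal to `1`. -/
def ternaryOnes (i : ℕ) : ℕ := (Nat.digits 3 i).count 1

/-- The triadic mass assignment determining the measure `μ`. -/
def ternarySpec (δ : ℝ) (μ : Measure ℝ) : Prop :=
  ∀ (j : ℤ) (n i : ℕ), i < 3 ^ n →
    μ (Set.Ico ((j : ℝ) + (i : ℝ) / 3 ^ n) ((j : ℝ) + ((i : ℝ) + 1) / 3 ^ n)) =
      ENNReal.ofReal (δ ^ (n - ternaryOnes i) * (1 - 2 * δ) ^ ternaryOnes i)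

/-- The triadic interval `[i·3⁻ⁿ, (i+1)·3⁻ⁿ) ⊆ [0,1)` of generation `n`, `0 ≤ i < 3 ^ n`. -/
def triIco (n i : ℕ) : Set ℝ := Set.Ico ((i : ℝ) / 3 ^ n) (((i : ℝ) + 1) / 3 ^ n)

/-- Indices `0 ≤ i < 3 ^ n` of the "heavy" triadic intervals of generation `n` inside `[0,1)`,
those with `μ(I) ≥ δ ^ k · (1 - 2δ) ^ (n - k)`. -/
def goodIdx (δ : ℝ) (μ : Measure ℝ) (n k : ℕ) : Set ℕ :=
  {i | i < 3 ^ n ∧ ENNReal.ofReal (δ ^ k * (1 - 2 * δ) ^ (n - k)) ≤ μ (triIco n i)}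

/-- `K(n,k)`: the union of the triadic intervals `I ⊆ [0,1)` of generation `n` with
`μ(I) ≥ δ ^ k · (1 - 2δ) ^ (n - k)`. -/
def Kset (δ : ℝ) (μ : Measure ℝ) (n k : ℕ) : Set ℝ := ⋃ i ∈ goodIdx δ μ n k, triIco n i

lemma ternaryOnes_le {n i : ℕ} (h : i < 3 ^ n) : ternaryOnes i ≤ n := by
  rcases Nat.eq_zero_or_pos i with rfl | hi
  · simp [ternaryOnes]
  · calc (Nat.digits 3 i).count 1 ≤ (Nat.digits 3 i).length := List.count_le_length
      _ ≤ n := by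
        rw [Nat.digits_len 3 i (by norm_num) hi.ne']
        have := Nat.log_lt_of_lt_pow hi.ne' h
        omega

lemma ternaryOnes_three_mul_add (q r : ℕ) (hr : r < 3) :
    ternaryOnes (3 * q + r) = ternaryOnes q + if r = 1 then 1 else 0 := by
  rcases Nat.eq_zero_or_pos (3 * q + r) with h | h
  · have hq : q = 0 := by omega
    have hr0 : r = 0 := by omega
    subst hq; subst hr0; simp [ternaryOnes]

  · rw [ternaryOnes, Nat.digits_def' (by norm_num : 1 < 3) h]
    have h1 : (3 * q + r) % 3 = r := by omega
    have h2 : (3 * q + r) / 3 = q := by omega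
    rw [h1, h2, List.count_cons]
    simp [ternaryOnes]

lemma sum_range_three_mul (m : ℕ) (f : ℕ → ℝ) :
    ∑ i ∈ Finset.range (3 * m), f i
      = ∑ q ∈ Finset.range m, (f (3 * q) + f (3 * q + 1) + f (3 * q + 2)) := by
  induction m with
  | zero => simp
  | succ m ih =>
    have h3 : 3 * (m + 1) = 3 * m + 1 + 1 + 1 := by ring
    rw [h3, Finset.sum_range_succ, Finset.sum_range_succ, Finset.sum_range_succ, ih,
      Finset.sum_range_succ]
    ring

lemma sum_lam (lam : ℝ) (hlam : 0 ≤ lam) (n : ℕ) :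
    ∑ i ∈ Finset.range (3 ^ n), lam ^ (n - ternaryOnes i) = (1 + 2 * lam) ^ n := by
  induction n with
  | zero => simp [ternaryOnes]
  | succ n ih =>
    have h3 : (3 : ℕ) ^ (n + 1) = 3 * 3 ^ n := by ring
    rw [h3, sum_range_three_mul]
    have hcongr : ∀ q ∈ Finset.range (3 ^ n),
        lam ^ (n + 1 - ternaryOnes (3 * q)) + lam ^ (n + 1 - ternaryOnes (3 * q + 1))
          + lam ^ (n + 1 - ternaryOnes (3 * q + 2))
        = (1 + 2 * lam) * lam ^ (n - ternaryOnes q) := by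
      intro q hq
      have hT := ternaryOnes_le (Finset.mem_range.mp hq)
      have e0 : ternaryOnes (3 * q) = ternaryOnes q := by
        simpa using ternaryOnes_three_mul_add q 0 (by norm_num)
      have e1 : ternaryOnes (3 * q + 1) = ternaryOnes q + 1 := by
        simpa using ternaryOnes_three_mul_add q 1 (by norm_num)
      have e2 : ternaryOnes (3 * q + 2) = ternaryOnes q := by
        simpa using ternaryOnes_three_mul_add q 2 (by norm_num)
      rw [e0, e1, e2]
      have f1 : n + 1 - ternaryOnes q = (n - ternaryOnes q) + 1 := by omega
      have f2 : n + 1 - (ternaryOnes q + 1) = n - ternaryOnes q := by omega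
      rw [f1, f2]; ring
    rw [Finset.sum_congr rfl hcongr, ← Finset.mul_sum, ih, pow_succ]; ring

lemma Kset_subset_Ico (δ : ℝ) (μ : Measure ℝ) (n k : ℕ) :
    Kset δ μ n k ⊆ Set.Ico (0 : ℝ) 1 := by
  intro x hx
  simp only [Kset, Set.mem_iUnion] at hx
  obtain ⟨i, hi, hx⟩ := hx
  obtain ⟨hi3, -⟩ := hi
  obtain ⟨hx1, hx2⟩ := hx
  have h3 : (0:ℝ) < 3 ^ n := by positivity
  constructor
  · refine le_trans ?_ hx1; positivity
  · refine lt_of_lt_of_le hx2 ?_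
    rw [div_le_one h3]
    have : (i : ℝ) + 1 ≤ ((3:ℕ) ^ n : ℕ) := by exact_mod_cast Nat.succ_le_of_lt hi3
    simpa using this

lemma heavy_imp (δ : ℝ) (hδ0 : 0 < δ) (hlt : δ < 1 - 2 * δ) {n k i : ℕ}
    (hkn : k ≤ n) (hi : i < 3 ^ n)
    (h : δ ^ k * (1 - 2 * δ) ^ (n - k) ≤ δ ^ (n - ternaryOnes i) * (1 - 2 * δ) ^ ternaryOnes i) :
    n - ternaryOnes i ≤ k := by
  by_contra hc
  push_neg at hc
  have hj : ternaryOnes i ≤ n := ternaryOnes_le hi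
  set j := ternaryOnes i with hjdef
  set m := n - j with hm
  have hδ1 : (0:ℝ) < 1 - 2 * δ := hδ0.trans hlt
  have key : δ ^ m * (1 - 2 * δ) ^ j < δ ^ k * (1 - 2 * δ) ^ (n - k) := by
    have h1 : δ ^ m = δ ^ k * δ ^ (m - k) := by rw [← pow_add]; congr 1; omega
    have h2 : (1 - 2 * δ) ^ (n - k) = (1 - 2 * δ) ^ (m - k) * (1 - 2 * δ) ^ j := by
      rw [← pow_add]; congr 1; omega
    rw [h1, h2]
    have hmk : δ ^ (m - k) < (1 - 2 * δ) ^ (m - k) :=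
      pow_lt_pow_left₀ hlt hδ0.le (by omega)
    calc δ ^ k * δ ^ (m - k) * (1 - 2 * δ) ^ j
        = δ ^ k * (δ ^ (m - k) * (1 - 2 * δ) ^ j) := by ring
      _ < δ ^ k * ((1 - 2 * δ) ^ (m - k) * (1 - 2 * δ) ^ j) :=
          mul_lt_mul_of_pos_left
            (mul_lt_mul_of_pos_right hmk (pow_pos hδ1 j)) (pow_pos hδ0 k)
  exact absurd h (not_le.mpr key)

/-- If `2δn ≤ k ≤ (2/3)n` then the Lebesgue measure of `K(n,k)` satisfies
`|K(n,k)| ≤ 3⁻ⁿ · exp(k(1 + log(1/δ)))`. -/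
theorem lebesgue_Kset_upper_bound (δ : ℝ) (hδ0 : 0 < δ) (hδ : δ ≤ 1 / 3)
    (μ : Measure ℝ) (hμ : ternarySpec δ μ) (n k : ℕ)
    (hk1 : 2 * δ * n ≤ (k : ℝ)) (hk2 : (k : ℝ) ≤ 2 / 3 * n) :
    volume (Kset δ μ n k) ≤
      ENNReal.ofReal ((3 : ℝ) ^ (-(n : ℤ)) * Real.exp ((k : ℝ) * (1 + Real.log (1 / δ)))) := by
  have hexp : Real.exp ((k : ℝ) * (1 + Real.log (1 / δ)))
      = Real.exp k * (1 / δ) ^ k := by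
    rw [mul_add, mul_one, Real.exp_add, mul_comm (k:ℝ) (Real.log (1/δ)),
      Real.exp_mul, Real.exp_log (by positivity), Real.rpow_natCast]
  have hvol1 : volume (Kset δ μ n k) ≤ 1 := by
    calc volume (Kset δ μ n k) ≤ volume (Set.Ico (0:ℝ) 1) :=
          measure_mono (Kset_subset_Ico δ μ n k)
      _ = 1 := by simp
  -- trivial case n = 0
  rcases Nat.eq_zero_or_pos n with rfl | hn
  · have hk0 : k = 0 := by
      have : (k : ℝ) ≤ 0 := by simpa using hk2
      exact_mod_cast le_antisymm (by exact_mod_cast this) (Nat.zero_le k)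
    subst hk0
    simpa using hvol1
  -- case δ = 1/3
  rcases eq_or_lt_of_le hδ with rfl | hδlt
  · refine le_trans hvol1 ?_
    rw [← ENNReal.ofReal_one]
    apply ENNReal.ofReal_le_ofReal
    have hkval : (k : ℝ) = 2 / 3 * n := le_antisymm hk2 (by linarith)
    have hlog3 : Real.log 3 ≤ 2 := by
      rw [← Real.exp_le_exp, Real.exp_log (by norm_num : (0:ℝ) < 3)]
      have h2 : Real.exp 2 = Real.exp 1 * Real.exp 1 := by
        rw [← Real.exp_add]; norm_num
      nlinarith [Real.add_one_le_exp (1:ℝ), h2]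
    have h3n : (3:ℝ) ^ (-(n:ℤ)) = ((3:ℝ) ^ n)⁻¹ := by
      rw [zpow_neg, zpow_natCast]
    rw [h3n, ← div_eq_inv_mul, le_div_iff₀ (by positivity), one_mul]
    have hpow : (3:ℝ) ^ n = Real.exp (n * Real.log 3) := by
      rw [Real.exp_nat_mul, Real.exp_log (by norm_num : (0:ℝ) < 3)]
    rw [hpow, Real.exp_le_exp]
    have : Real.log (1 / (1/3 : ℝ)) = Real.log 3 := by norm_num
    rw [this, hkval]
    nlinarith [Real.log_pos (by norm_num : (1:ℝ) < 3), hlog3, (Nat.cast_pos (α := ℝ)).mpr hn]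
  -- main case: δ < 1/3
  have hδ1 : δ < 1 - 2 * δ := by linarith
  have hnR : (0:ℝ) < n := Nat.cast_pos.mpr hn
  have hkpos : 1 ≤ k := by
    by_contra h
    push_neg at h
    have hk0 : k = 0 := by omega
    subst hk0
    have : (0:ℝ) < 2 * δ * n := by positivity
    simp only [Nat.cast_zero] at hk1
    linarith
  have hkR : (0:ℝ) < k := by exact_mod_cast hkpos
  have hkn : k ≤ n := by
    have : (k:ℝ) ≤ n := le_trans hk2 (by linarith)
    exact_mod_cast this
  set lam : ℝ := k / (2 * n) with hlam
  have hlam0 : 0 < lam := by positivity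
  have hlam1 : lam ≤ 1 := by
    rw [hlam, div_le_one (by positivity)]
    linarith
  set F : Finset ℕ := (Finset.range (3 ^ n)).filter (fun i => n - ternaryOnes i ≤ k) with hF
  have hμval : ∀ i, i < 3 ^ n → μ (triIco n i)
      = ENNReal.ofReal (δ ^ (n - ternaryOnes i) * (1 - 2 * δ) ^ ternaryOnes i) := by
    intro i hi
    have := hμ 0 n i hi
    simpa [triIco] using this
  have hgood : ∀ i ∈ goodIdx δ μ n k, i ∈ F := by
    intro i hi
    obtain ⟨hi3, hheavy⟩ := hi
    rw [hμval i hi3, ENNReal.ofReal_le_ofReal_iff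
      (mul_nonneg (pow_nonneg hδ0.le _) (pow_nonneg (by linarith) _))] at hheavy
    exact Finset.mem_filter.mpr ⟨Finset.mem_range.mpr hi3, heavy_imp δ hδ0 hδ1 hkn hi3 hheavy⟩
  have hvolI : ∀ i : ℕ, volume (triIco n i) = ENNReal.ofReal (((3:ℝ) ^ n)⁻¹) := by
    intro i
    rw [triIco, Real.volume_Ico]
    congr 1
    field_simp
    ring
  have hcard : volume (Kset δ μ n k) ≤ (F.card : ENNReal) * ENNReal.ofReal (((3:ℝ) ^ n)⁻¹) := by
    calc volume (Kset δ μ n k) ≤ volume (⋃ i ∈ F, triIco n i) := by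
          apply measure_mono
          intro x hx
          simp only [Kset, Set.mem_iUnion] at hx ⊢
          obtain ⟨i, hi, hx⟩ := hx
          exact ⟨i, hgood i hi, hx⟩
      _ ≤ ∑ i ∈ F, volume (triIco n i) := measure_biUnion_finset_le F _
      _ = (F.card : ENNReal) * ENNReal.ofReal (((3:ℝ) ^ n)⁻¹) := by
          rw [Finset.sum_congr rfl (fun i _ => hvolI i), Finset.sum_const, nsmul_eq_mul]
  have hcount : (F.card : ℝ) * lam ^ k ≤ (1 + 2 * lam) ^ n := by
    calc (F.card : ℝ) * lam ^ k = ∑ _i ∈ F, lam ^ k := by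
          rw [Finset.sum_const, nsmul_eq_mul]
      _ ≤ ∑ i ∈ F, lam ^ (n - ternaryOnes i) := by
          apply Finset.sum_le_sum
          intro i hi
          exact pow_le_pow_of_le_one hlam0.le hlam1 (Finset.mem_filter.mp hi).2
      _ ≤ ∑ i ∈ Finset.range (3 ^ n), lam ^ (n - ternaryOnes i) := by
          apply Finset.sum_le_sum_of_subset_of_nonneg (Finset.filter_subset _ _)
          intros
          positivity
      _ = (1 + 2 * lam) ^ n := sum_lam lam hlam0.le n
  have hcardR : (F.card : ℝ) ≤ Real.exp k * (1 / δ) ^ k := by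
    have h2lam : 2 * lam = (k:ℝ) / n := by
      rw [hlam]
      field_simp
    have h1 : (1 + 2 * lam) ^ n ≤ Real.exp k := by
      have he : 1 + 2 * lam ≤ Real.exp ((k:ℝ) / n) := by
        have := Real.add_one_le_exp ((k:ℝ) / n)
        linarith
      calc (1 + 2 * lam) ^ n ≤ (Real.exp ((k:ℝ) / n)) ^ n :=
            pow_le_pow_left₀ (by positivity) he n
        _ = Real.exp k := by
            rw [← Real.exp_nat_mul]
            congr 1
            field_simp
    have h2 : (F.card : ℝ) ≤ (1 + 2 * lam) ^ n / lam ^ k := by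
      rw [le_div_iff₀ (by positivity)]
      exact hcount
    refine le_trans h2 ?_
    calc (1 + 2 * lam) ^ n / lam ^ k = (1 + 2 * lam) ^ n * (lam⁻¹) ^ k := by
          rw [div_eq_mul_inv, inv_pow]
      _ ≤ Real.exp k * (1 / δ) ^ k := by
          apply mul_le_mul h1 ?_ (by positivity) (Real.exp_pos _).le
          apply pow_le_pow_left₀ (by positivity) ?_ k
          rw [hlam, ← one_div, div_div_eq_mul_div, one_mul, div_le_div_iff₀ hkR hδ0]
          nlinarith
  refine le_trans hcard ?_
  rw [show (F.card : ENNReal) = ENNReal.ofReal (F.card : ℝ) by simp,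
    ← ENNReal.ofReal_mul (by positivity)]
  apply ENNReal.ofReal_le_ofReal
  rw [hexp, show (3:ℝ) ^ (-(n:ℤ)) = ((3:ℝ) ^ n)⁻¹ by rw [zpow_neg, zpow_natCast]]
  calc (F.card : ℝ) * ((3:ℝ) ^ n)⁻¹ ≤ (Real.exp k * (1 / δ) ^ k) * ((3:ℝ) ^ n)⁻¹ :=
        mul_le_mul_of_nonneg_right hcardR (by positivity)
    _ = ((3:ℝ) ^ n)⁻¹ * (Real.exp k * (1 / δ) ^ k) := by ring
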